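/- Let q ∈ (0,1) and ν > -1 with (1-q)(1-q^ν) > √q. Then for every z in the open unit disk U, the derivative of the normalized Jackson third (Hahn–Exton) q-Bessel function satisfies |(h_ν^{(3)})'(z;q)| ≤ ((1-q)(1-q^ν) / ((1-q)(1-q^ν) - √q))^2, where (h_ν^{(3)})'(z;q) = Σ_{n≥0} (n+1) T_n z^{n}. -/

import Mathlib

open Complex

/-- q-Pochhammer symbol (a;q)_n = ∏_{k=1}^n (1 - a q^{k-1}). -/
noncomputable def qPoch (a q : ℝ) (n : ℕ) : ℝ :=
  ∏ k ∈ Finset.range n, (1 - a * q ^ k)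

/-- Coefficients of the normalized Jackson third (Hahn-Exton) q-Bessel function. -/
noncomputable def T (q ν : ℝ) (n : ℕ) : ℝ :=
  (-1) ^ n * q ^ (((n : ℝ) * ((n : ℝ) + 1)) / 2) /
    (qPoch q q n * qPoch (q ^ (ν + 1)) q n)

/-- Normalized Jackson third (Hahn-Exton) q-Bessel function h_ν^{(3)}(z;q). -/
noncomputable def h3 (q ν : ℝ) (z : ℂ) : ℂ :=
  ∑' n : ℕ, (T q ν n : ℂ) * z ^ (n + 1)

/-- Derivative of the normalized Jackson third q-Bessel function. -/
noncomputable def h3' (q ν : ℝ) (z : ℂ) : ℂ :=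
  ∑' n : ℕ, ((n : ℂ) + 1) * (T q ν n : ℂ) * z ^ n

/-- m-th partial sum of h_ν^{(3)}(z;q). -/
noncomputable def h3p (q ν : ℝ) (m : ℕ) (z : ℂ) : ℂ :=
  z + ∑ n ∈ Finset.Icc 1 m, (T q ν n : ℂ) * z ^ (n + 1)

/-- Derivative of the m-th partial sum of h_ν^{(3)}(z;q). -/
noncomputable def h3p' (q ν : ℝ) (m : ℕ) (z : ℂ) : ℂ :=
  1 + ∑ n ∈ Finset.Icc 1 m, ((n : ℂ) + 1) * (T q ν n : ℂ) * z ^ n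

theorem stmt3 (q ν : ℝ) (hq : q ∈ Set.Ioo (0 : ℝ) 1) (hν : -1 < ν)
    (hc : (1 - q) * (1 - q ^ ν) > Real.sqrt q) :
    ∀ z : ℂ, ‖z‖ < 1 →
      ‖h3' q ν z‖ ≤ ((1 - q) * (1 - q ^ ν) / ((1 - q) * (1 - q ^ ν) - Real.sqrt q)) ^ 2 := by
  obtain ⟨hq0, hq1⟩ := hq
  have hsq : 0 < Real.sqrt q := Real.sqrt_pos.mpr hq0
  have hq' : 0 < 1 - q := by linarith
  set A := (1 - q) * (1 - q ^ ν) with hAdef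
  have hA0 : 0 < A := lt_trans hsq hc
  have hν0 : 0 < 1 - q ^ ν := by
    by_contra h
    push_neg at h
    have : A ≤ 0 := mul_nonpos_of_nonneg_of_nonpos hq'.le h
    linarith
  set r := Real.sqrt q / A with hrdef
  have hr0 : 0 ≤ r := div_nonneg hsq.le hA0.le
  have hr1 : r < 1 := (div_lt_one hA0).mpr hc
  -- bound on coefficients
  have hP1 : ∀ n : ℕ, (1 - q) ^ n ≤ qPoch q q n := by
    intro n
    rw [qPoch]
    have := Finset.prod_le_prod (s := Finset.range n) (f := fun _ => 1 - q)
      (g := fun k => 1 - q * q ^ k) (fun _ _ => hq'.le) (fun k _ => by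
        have h1 : q * q ^ k ≤ q := by
          nlinarith [pow_le_one₀ hq0.le hq1.le (n := k), pow_pos hq0 k]
        show (1 - _ : ℝ) ≤ 1 - _; linarith)
    simpa using this
  have hP2 : ∀ n : ℕ, (1 - q ^ ν) ^ n ≤ qPoch (q ^ (ν + 1)) q n := by
    intro n
    rw [qPoch]
    have := Finset.prod_le_prod (s := Finset.range n) (f := fun _ => 1 - q ^ ν)
      (g := fun k => 1 - q ^ (ν + 1) * q ^ k) (fun _ _ => hν0.le) (fun k _ => by
        have h1 : q ^ (ν + 1) * q ^ k ≤ q ^ ν := by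
          rw [← Real.rpow_natCast q k, ← Real.rpow_add hq0]
          exact Real.rpow_le_rpow_of_exponent_ge hq0 hq1.le
            (by push_cast; linarith [Nat.cast_nonneg (α := ℝ) k])
        show (1 - _ : ℝ) ≤ 1 - _; linarith)
    simpa using this
  have hP1pos : ∀ n : ℕ, 0 < qPoch q q n := fun n => lt_of_lt_of_le (pow_pos hq' n) (hP1 n)
  have hP2pos : ∀ n : ℕ, 0 < qPoch (q ^ (ν + 1)) q n := fun n => lt_of_lt_of_le (pow_pos hν0 n) (hP2 n)
  have hnum : ∀ n : ℕ, q ^ (((n : ℝ) * ((n : ℝ) + 1)) / 2) ≤ (Real.sqrt q) ^ n := by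
    intro n
    rw [Real.sqrt_eq_rpow, ← Real.rpow_natCast (q ^ ((1:ℝ)/2)) n, ← Real.rpow_mul hq0.le]
    apply Real.rpow_le_rpow_of_exponent_ge hq0 hq1.le
    have : (0:ℝ) ≤ (n:ℝ) := Nat.cast_nonneg n
    nlinarith
  have hT : ∀ n : ℕ, |T q ν n| ≤ r ^ n := by
    intro n
    have hden : 0 < qPoch q q n * qPoch (q ^ (ν + 1)) q n := mul_pos (hP1pos n) (hP2pos n)
    have hnumpos : 0 ≤ q ^ (((n : ℝ) * ((n : ℝ) + 1)) / 2) := (Real.rpow_pos_of_pos hq0 _).le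
    have habs : |T q ν n| = q ^ (((n : ℝ) * ((n : ℝ) + 1)) / 2) / (qPoch q q n * qPoch (q ^ (ν + 1)) q n) := by
      rw [T, abs_div, abs_mul, _root_.abs_pow, abs_neg, abs_one, one_pow, one_mul,
        _root_.abs_of_nonneg hnumpos, _root_.abs_of_pos hden]
    rw [habs, hrdef, div_pow, hAdef, mul_pow]
    apply div_le_div₀ (by positivity) (hnum n) (by positivity)
    exact mul_le_mul (hP1 n) (hP2 n) (pow_nonneg hν0.le n) (hP1pos n).le
  intro z hz
  -- termwise norm bound
  have hbound : ∀ n : ℕ, ‖((n : ℂ) + 1) * (T q ν n : ℂ) * z ^ n‖ ≤ ((n:ℝ) + 1) * r ^ n := by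
    intro n
    rw [norm_mul, norm_mul, norm_pow]
    have h1 : ‖((n : ℂ) + 1)‖ = (n:ℝ) + 1 := by
      have : ((n : ℂ) + 1) = (((n:ℝ) + 1 : ℝ) : ℂ) := by push_cast; ring
      rw [this, Complex.norm_real, Real.norm_eq_abs, _root_.abs_of_nonneg (by positivity : (0:ℝ) ≤ (n:ℝ) + 1)]
    have h2 : ‖((T q ν n : ℝ) : ℂ)‖ = |T q ν n| := by
      rw [Complex.norm_real, Real.norm_eq_abs]
    rw [h1, h2]
    have hzn : ‖z‖ ^ n ≤ 1 := pow_le_one₀ (norm_nonneg z) (by exact hz.le)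
    calc ((n:ℝ)+1) * |T q ν n| * ‖z‖^n ≤ ((n:ℝ)+1) * r^n * 1 := by
          apply mul_le_mul (mul_le_mul_of_nonneg_left (hT n) (by positivity)) hzn (by positivity) (by positivity)
      _ = ((n:ℝ)+1) * r^n := by ring
  have hnr : ‖r‖ < 1 := by rwa [Real.norm_eq_abs, _root_.abs_of_nonneg hr0]
  have hHS : HasSum (fun n : ℕ => ((n + 1).choose 1 : ℝ) * r ^ n) (1 / (1 - r) ^ (1 + 1)) :=
    hasSum_choose_mul_geometric_of_norm_lt_one 1 hnr
  have hHS' : HasSum (fun n : ℕ => ((n:ℝ) + 1) * r ^ n) (1 / (1 - r) ^ 2) := by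
    convert hHS using 2 with n
    simp [Nat.choose_one_right]
  have hsum : Summable (fun n : ℕ => ((n:ℝ) + 1) * r ^ n) := hHS'.summable
  have hsumnorm : Summable (fun n : ℕ => ‖((n : ℂ) + 1) * (T q ν n : ℂ) * z ^ n‖) :=
    Summable.of_nonneg_of_le (fun n => norm_nonneg _) hbound hsum
  have key : ‖h3' q ν z‖ ≤ 1 / (1 - r) ^ 2 := by
    rw [h3']
    calc ‖∑' n : ℕ, ((n : ℂ) + 1) * (T q ν n : ℂ) * z ^ n‖
        ≤ ∑' n : ℕ, ‖((n : ℂ) + 1) * (T q ν n : ℂ) * z ^ n‖ := norm_tsum_le_tsum_norm hsumnorm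
      _ ≤ ∑' n : ℕ, ((n:ℝ) + 1) * r ^ n := Summable.tsum_le_tsum hbound hsumnorm hsum
      _ = 1 / (1 - r) ^ 2 := hHS'.tsum_eq
  have hfin : 1 / (1 - r) ^ 2 = (A / (A - Real.sqrt q)) ^ 2 := by
    have h1 : 1 - r = (A - Real.sqrt q) / A := by
      field_simp [hrdef]
      rw [hrdef, sub_mul, div_mul_cancel₀ _ hA0.ne', one_mul]
    rw [h1, div_pow, one_div_div, div_pow]
  rw [hfin] at key
  exact key
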